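/- For every X ∈ Mₙ(ℂ), the matrix exponential exp : Mₙ(ℂ) → Mₙ(ℂ) is Fréchet differentiable at X, and its derivative is the linear map Y ↦ (Σ_{k=0}^{∞} (ad X)^k(Y) / (k+1)!) · exp(X), where ad X (Y) := XY − YX; in other words, d exp_X(Y) = Φ(ad X)(Y) · e^X, where Φ(t) = (e^t − 1)/t. -/

import Mathlib

/- STATEMENT 1: The matrix exponential exp : Mₙ(ℂ) → Mₙ(ℂ) is Fréchet differentiable at
every X, with derivative Y ↦ (Σ_{k=0}^∞ (ad X)^k(Y)/(k+1)!) · exp(X) = Φ(ad X)(Y)·e^X,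
where Φ(t) = (e^t−1)/t and ad X (Y) = XY − YX. -/

attribute [local instance] Matrix.linftyOpNormedRing Matrix.linftyOpNormedAlgebra

/-- The operator `ad X : Y ↦ XY − YX` on `Mₙ(ℂ)`, as a continuous linear map. -/
noncomputable def adCLM (n : ℕ) (X : Matrix (Fin n) (Fin n) ℂ) :
    Matrix (Fin n) (Fin n) ℂ →L[ℂ] Matrix (Fin n) (Fin n) ℂ :=
  ContinuousLinearMap.mul ℂ (Matrix (Fin n) (Fin n) ℂ) X -
    (ContinuousLinearMap.mul ℂ (Matrix (Fin n) (Fin n) ℂ)).flip X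

/-- Right multiplication `Y ↦ Y * A` on `Mₙ(ℂ)`, as a continuous linear map. -/
noncomputable def mulRightCLM (n : ℕ) (A : Matrix (Fin n) (Fin n) ℂ) :
    Matrix (Fin n) (Fin n) ℂ →L[ℂ] Matrix (Fin n) (Fin n) ℂ :=
  (ContinuousLinearMap.mul ℂ (Matrix (Fin n) (Fin n) ℂ)).flip A

open Finset

/-! ### Auxiliary algebraic lemmas -/

lemma aux_sum_pow {R : Type*} [Ring R] {c b : R} (h : Commute c b) (m : ℕ) :
    ∑ i ∈ range (m + 1), (c + b) ^ i * b ^ (m - i)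
      = ∑ j ∈ range (m + 1), ((m + 1).choose (j + 1)) • (c ^ j * b ^ (m - j)) := by
  have hstep : ∀ i ∈ range (m + 1),
      (c + b) ^ i * b ^ (m - i)
        = ∑ j ∈ range (m + 1), (i.choose j) • (c ^ j * b ^ (m - j)) := by
    intro i hi
    rw [mem_range] at hi
    have hpow : (c + b) ^ i = ∑ j ∈ range (i + 1), i.choose j • (c ^ j * b ^ (i - j)) := by
      rw [h.add_pow']
      exact Nat.sum_antidiagonal_eq_sum_range_succ (fun j p => i.choose j • (c ^ j * b ^ p)) i
    rw [hpow, Finset.sum_mul]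
    have e1 : ∀ j ∈ range (i + 1),
        (i.choose j • (c ^ j * b ^ (i - j))) * b ^ (m - i)
          = i.choose j • (c ^ j * b ^ (m - j)) := by
      intro j hj
      rw [mem_range] at hj
      rw [smul_mul_assoc, mul_assoc, ← pow_add]
      congr 3
      omega
    rw [Finset.sum_congr rfl e1]
    refine Finset.sum_subset (by rw [range_subset_range]; omega) ?_
    intro j hj hj'
    rw [mem_range] at hj
    rw [mem_range] at hj'
    rw [Nat.choose_eq_zero_of_lt (by omega), zero_smul]
  rw [Finset.sum_congr rfl hstep, Finset.sum_comm]
  refine Finset.sum_congr rfl fun j hj => ?_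
  rw [← Finset.sum_smul]
  congr 1
  rw [← Nat.sum_Icc_choose]
  refine (Finset.sum_subset ?_ ?_).symm
  · intro i hi; rw [mem_Icc] at hi; rw [mem_range]; omega
  · intro i hi hi'
    rw [mem_range] at hi; rw [mem_Icc] at hi'
    exact Nat.choose_eq_zero_of_lt (by omega)

lemma coeff_eq (m j : ℕ) (hj : j ≤ m) :
    ((m + 1).factorial : ℂ)⁻¹ * ((m + 1).choose (j + 1) : ℂ)
      = ((j + 1).factorial : ℂ)⁻¹ * ((m - j).factorial : ℂ)⁻¹ := by
  have hnat : (m + 1).choose (j + 1) * ((j + 1).factorial * (m - j).factorial)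
      = (m + 1).factorial := by
    have := Nat.choose_mul_factorial_mul_factorial (Nat.succ_le_succ hj)
    simpa [Nat.succ_sub_succ, mul_assoc] using this
  have hC : ((m + 1).choose (j + 1) : ℂ) * (((j + 1).factorial : ℂ) * ((m - j).factorial : ℂ))
      = ((m + 1).factorial : ℂ) := by exact_mod_cast congrArg (Nat.cast : ℕ → ℂ) hnat
  have h1 : ((m + 1).factorial : ℂ) ≠ 0 := Nat.cast_ne_zero.mpr (Nat.factorial_ne_zero _)
  have h2 : ((j + 1).factorial : ℂ) ≠ 0 := Nat.cast_ne_zero.mpr (Nat.factorial_ne_zero _)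
  have h3 : ((m - j).factorial : ℂ) ≠ 0 := Nat.cast_ne_zero.mpr (Nat.factorial_ne_zero _)
  field_simp
  linear_combination hC

/-! ### Norm estimates and summability -/

section NormLemmas
variable {B : Type*} [NormedRing B]

lemma norm_pow_le_max' (x : B) (k : ℕ) :
    ‖x ^ k‖ ≤ max ‖(1 : B)‖ 1 * ‖x‖ ^ k := by
  cases k with
  | zero => simpa using le_max_left ‖(1 : B)‖ 1
  | succ k =>
    calc ‖x ^ (k + 1)‖ ≤ ‖x‖ ^ (k + 1) := norm_pow_le' x k.succ_pos
      _ ≤ max ‖(1 : B)‖ 1 * ‖x‖ ^ (k + 1) :=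
        le_mul_of_one_le_left (by positivity) (le_max_right _ _)

variable [NormedAlgebra ℂ B]

lemma summable_norm_inv_fact_smul_pow (x : B) :
    Summable fun k : ℕ => ‖((k.factorial : ℂ))⁻¹ • x ^ k‖ := by
  refine Summable.of_nonneg_of_le (fun k => norm_nonneg _) (fun k => ?_)
    ((Real.summable_pow_div_factorial ‖x‖).mul_left (max ‖(1 : B)‖ 1))
  rw [norm_smul, norm_inv, Complex.norm_natCast]
  calc ((k.factorial : ℝ))⁻¹ * ‖x ^ k‖
      ≤ ((k.factorial : ℝ))⁻¹ * (max ‖(1 : B)‖ 1 * ‖x‖ ^ k) := by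
        refine mul_le_mul_of_nonneg_left (norm_pow_le_max' x k) (by positivity)
    _ = max ‖(1 : B)‖ 1 * (‖x‖ ^ k / k.factorial) := by ring

lemma summable_norm_inv_fact_succ_smul_pow (x : B) :
    Summable fun k : ℕ => ‖(((k + 1).factorial : ℂ))⁻¹ • x ^ k‖ := by
  refine Summable.of_nonneg_of_le (fun k => norm_nonneg _) (fun k => ?_)
    (summable_norm_inv_fact_smul_pow x)
  rw [norm_smul, norm_smul, norm_inv, norm_inv, Complex.norm_natCast, Complex.norm_natCast]
  refine mul_le_mul_of_nonneg_right ?_ (norm_nonneg _)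
  refine inv_anti₀ ?_ ?_
  · exact_mod_cast Nat.factorial_pos k
  · exact_mod_cast Nat.factorial_le (Nat.le_succ k)

lemma summable_lhs [CompleteSpace B] (a b : B) :
    Summable fun m : ℕ =>
      ((m.factorial : ℂ))⁻¹ • ∑ i ∈ range m, a ^ i * b ^ (m - 1 - i) := by
  set N : ℝ := max ‖(1 : B)‖ 1 with hN
  set K : ℝ := max (max ‖a‖ ‖b‖) 1 with hK
  have hN1 : 1 ≤ N := le_max_right _ _
  have hK1 : 1 ≤ K := le_max_right _ _
  have hN0 : 0 ≤ N := by positivity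
  have hK0 : 0 ≤ K := by positivity
  refine Summable.of_norm_bounded
    (((Real.summable_pow_div_factorial (2 * K)).mul_left (N ^ 2))) (fun m => ?_)
  rw [norm_smul, norm_inv, Complex.norm_natCast]
  have hterm : ∀ i ∈ range m, ‖a ^ i * b ^ (m - 1 - i)‖ ≤ N ^ 2 * K ^ m := by
    intro i hi
    rw [mem_range] at hi
    calc ‖a ^ i * b ^ (m - 1 - i)‖ ≤ ‖a ^ i‖ * ‖b ^ (m - 1 - i)‖ := norm_mul_le _ _
      _ ≤ (N * ‖a‖ ^ i) * (N * ‖b‖ ^ (m - 1 - i)) := by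
          refine mul_le_mul (norm_pow_le_max' a i) (norm_pow_le_max' b _) (norm_nonneg _) ?_
          positivity
      _ ≤ (N * K ^ i) * (N * K ^ (m - 1 - i)) := by
          have ha : ‖a‖ ≤ K := le_trans (le_max_left _ _) (le_max_left _ _)
          have hb : ‖b‖ ≤ K := le_trans (le_max_right _ _) (le_max_left _ _)
          gcongr
      _ = N ^ 2 * K ^ (i + (m - 1 - i)) := by rw [pow_add]; ring
      _ ≤ N ^ 2 * K ^ m := by
          gcongr
          · omega
  have hsum : ‖∑ i ∈ range m, a ^ i * b ^ (m - 1 - i)‖ ≤ m * (N ^ 2 * K ^ m) := by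
    calc ‖∑ i ∈ range m, a ^ i * b ^ (m - 1 - i)‖
        ≤ ∑ i ∈ range m, ‖a ^ i * b ^ (m - 1 - i)‖ := norm_sum_le _ _
      _ ≤ ∑ _i ∈ range m, N ^ 2 * K ^ m := Finset.sum_le_sum hterm
      _ = m * (N ^ 2 * K ^ m) := by rw [Finset.sum_const, card_range]; simp [nsmul_eq_mul]
  have hm2 : (m : ℝ) ≤ 2 ^ m := by exact_mod_cast (Nat.lt_two_pow_self (n := m)).le
  calc ((m.factorial : ℝ))⁻¹ * ‖∑ i ∈ range m, a ^ i * b ^ (m - 1 - i)‖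
      ≤ ((m.factorial : ℝ))⁻¹ * (m * (N ^ 2 * K ^ m)) := by
        refine mul_le_mul_of_nonneg_left hsum (by positivity)
    _ ≤ ((m.factorial : ℝ))⁻¹ * (2 ^ m * (N ^ 2 * K ^ m)) := by
        refine mul_le_mul_of_nonneg_left ?_ (by positivity)
        refine mul_le_mul_of_nonneg_right hm2 (by positivity)
    _ = N ^ 2 * ((2 * K) ^ m / m.factorial) := by rw [mul_pow]; ring

end NormLemmas

/-! ### The key `tsum` identity -/

lemma heart' {B : Type*} [NormedRing B] [NormedAlgebra ℂ B] [CompleteSpace B]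
    {a b : B} (h : Commute a b) :
    ∑' m : ℕ, ((m.factorial : ℂ))⁻¹ • ∑ i ∈ range m, a ^ i * b ^ (m - 1 - i)
      = (∑' k : ℕ, ((k.factorial : ℂ))⁻¹ • b ^ k)
          * ∑' k : ℕ, (((k + 1).factorial : ℂ))⁻¹ • (a - b) ^ k := by
  have hcb : Commute (a - b) b := h.sub_left (Commute.refl b)
  have hbc : Commute b (a - b) := hcb.symm
  rw [tsum_mul_tsum_eq_tsum_sum_range_of_summable_norm
    (summable_norm_inv_fact_smul_pow b) (summable_norm_inv_fact_succ_smul_pow (a - b))]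
  rw [Summable.tsum_eq_zero_add (summable_lhs a b)]
  simp only [range_zero, sum_empty, smul_zero, zero_add]
  refine tsum_congr fun m => ?_
  have e0 : ∀ i : ℕ, m + 1 - 1 - i = m - i := fun i => by omega
  have key := aux_sum_pow hcb m
  rw [sub_add_cancel] at key
  calc ((m + 1).factorial : ℂ)⁻¹ • ∑ i ∈ range (m + 1), a ^ i * b ^ (m + 1 - 1 - i)
      = ((m + 1).factorial : ℂ)⁻¹ • ∑ i ∈ range (m + 1), a ^ i * b ^ (m - i) := by
        simp only [e0]
    _ = ∑ j ∈ range (m + 1),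
          (((j + 1).factorial : ℂ)⁻¹ * ((m - j).factorial : ℂ)⁻¹) • ((a - b) ^ j * b ^ (m - j)) := by
        rw [key, Finset.smul_sum]
        refine Finset.sum_congr rfl fun j hj => ?_
        rw [mem_range] at hj
        rw [← Nat.cast_smul_eq_nsmul ℂ, smul_smul, coeff_eq m j (by omega)]
    _ = ∑ j ∈ range (m + 1),
          (((m - j + 1).factorial : ℂ)⁻¹ * (j.factorial : ℂ)⁻¹) • ((a - b) ^ (m - j) * b ^ j) := by
        rw [← Finset.sum_range_reflect]
        refine Finset.sum_congr rfl fun j hj => ?_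
        rw [mem_range] at hj
        have h1 : m + 1 - 1 - j = m - j := by omega
        have h2 : m - (m - j) = j := by omega
        rw [h1, h2]
    _ = ∑ j ∈ range (m + 1),
          ((j.factorial : ℂ))⁻¹ • b ^ j * (((m - j + 1).factorial : ℂ))⁻¹ • (a - b) ^ (m - j) := by
        refine Finset.sum_congr rfl fun j hj => ?_
        rw [smul_mul_smul_comm, (hbc.pow_pow j (m - j)).eq, mul_comm (((j.factorial : ℂ))⁻¹)]

/-! ### Continuous linear map lemmas -/

section CLMLemmas
variable {A : Type*} [NormedRing A] [NormedAlgebra ℂ A]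

lemma mulLeftCLM_pow_apply (x y : A) (k : ℕ) :
    ((ContinuousLinearMap.mul ℂ A x) ^ k) y = x ^ k * y := by
  induction k generalizing y with
  | zero => simp
  | succ k ih =>
    rw [pow_succ, ContinuousLinearMap.mul_apply, ContinuousLinearMap.mul_apply', ih,
      ← mul_assoc, ← pow_succ]

lemma mulRightCLM_pow_apply (x y : A) (k : ℕ) :
    (((ContinuousLinearMap.mul ℂ A).flip x) ^ k) y = y * x ^ k := by
  induction k generalizing y with
  | zero => simp
  | succ k ih =>
    rw [pow_succ, ContinuousLinearMap.mul_apply, ContinuousLinearMap.flip_apply,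
      ContinuousLinearMap.mul_apply', ih, mul_assoc, ← pow_succ']

lemma mulLeftCLM_pow (x : A) (k : ℕ) :
    ContinuousLinearMap.mul ℂ A (x ^ k) = (ContinuousLinearMap.mul ℂ A x) ^ k :=
  ContinuousLinearMap.ext fun y => by
    rw [mulLeftCLM_pow_apply, ContinuousLinearMap.mul_apply']

lemma mulRightCLM_pow (x : A) (k : ℕ) :
    (ContinuousLinearMap.mul ℂ A).flip (x ^ k) = ((ContinuousLinearMap.mul ℂ A).flip x) ^ k :=
  ContinuousLinearMap.ext fun y => by
    rw [mulRightCLM_pow_apply, ContinuousLinearMap.flip_apply, ContinuousLinearMap.mul_apply']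

lemma comp_pow_eq (x : A) (i j : ℕ) :
    (ContinuousLinearMap.mul ℂ A (x ^ i)).comp ((ContinuousLinearMap.mul ℂ A).flip (x ^ j))
      = (ContinuousLinearMap.mul ℂ A x) ^ i * ((ContinuousLinearMap.mul ℂ A).flip x) ^ j := by
  rw [mulLeftCLM_pow, mulRightCLM_pow, ContinuousLinearMap.mul_def]

lemma commute_mulLeft_mulRight (x : A) :
    Commute (ContinuousLinearMap.mul ℂ A x) ((ContinuousLinearMap.mul ℂ A).flip x) := by
  refine ContinuousLinearMap.ext fun y => ?_
  simp only [ContinuousLinearMap.mul_apply, ContinuousLinearMap.flip_apply,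
    ContinuousLinearMap.mul_apply', mul_assoc]

lemma hasFDerivAt_pow_clm (m : ℕ) (W : A) :
    HasFDerivAt (fun Z : A => Z ^ m)
      (∑ i ∈ range m, (ContinuousLinearMap.mul ℂ A (W ^ i)).comp
        ((ContinuousLinearMap.mul ℂ A).flip (W ^ (m - 1 - i)))) W := by
  induction m with
  | zero =>
    simp only [pow_zero, range_zero, sum_empty]
    exact hasFDerivAt_const 1 W
  | succ m ih =>
    have h := (hasFDerivAt_id W).mul' ih
    have hfun : (id * fun Z : A => Z ^ m) = fun Z : A => Z ^ (m + 1) := by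
      funext Z; rw [Pi.mul_apply, id_eq, ← pow_succ']
    rw [hfun] at h
    refine h.congr_fderiv ?_
    symm
    refine ContinuousLinearMap.ext fun Y => ?_
    simp only [ContinuousLinearMap.add_apply, ContinuousLinearMap.smul_apply,
      ContinuousLinearMap.smulRight_apply, ContinuousLinearMap.coe_id', id_eq,
      ContinuousLinearMap.coe_sum', Finset.sum_apply, ContinuousLinearMap.coe_comp',
      Function.comp_apply, ContinuousLinearMap.mul_apply', ContinuousLinearMap.flip_apply,
      smul_eq_mul, op_smul_eq_mul]
    rw [Finset.sum_range_succ']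
    simp only [pow_zero, one_mul, Nat.sub_zero]
    rw [Finset.mul_sum]
    congr 1
    refine Finset.sum_congr rfl fun i hi => ?_
    rw [mem_range] at hi
    have e1 : m + 1 - 1 - (i + 1) = m - 1 - i := by omega
    rw [e1]
    simp [pow_succ', mul_assoc]

lemma opNorm_mulLeft_le (x : A) : ‖ContinuousLinearMap.mul ℂ A x‖ ≤ ‖x‖ := by
  refine ContinuousLinearMap.opNorm_le_bound _ (norm_nonneg x) fun y => ?_
  simpa [ContinuousLinearMap.mul_apply'] using norm_mul_le x y

lemma opNorm_mulRight_le (x : A) : ‖(ContinuousLinearMap.mul ℂ A).flip x‖ ≤ ‖x‖ := by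
  refine ContinuousLinearMap.opNorm_le_bound _ (norm_nonneg x) fun y => ?_
  simpa [ContinuousLinearMap.flip_apply, ContinuousLinearMap.mul_apply', mul_comm ‖x‖]
    using norm_mul_le y x

lemma D_norm_bound (m : ℕ) (W : A) (r : ℝ) (hr1 : 1 ≤ r) (hW : ‖W‖ ≤ r) :
    ‖((m.factorial : ℂ))⁻¹ • ∑ i ∈ range m, (ContinuousLinearMap.mul ℂ A (W ^ i)).comp
        ((ContinuousLinearMap.mul ℂ A).flip (W ^ (m - 1 - i)))‖
      ≤ (max ‖(1 : A)‖ 1) ^ 2 * ((2 * r) ^ m / m.factorial) := by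
  set N : ℝ := max ‖(1 : A)‖ 1 with hN
  have hN1 : (1 : ℝ) ≤ N := le_max_right _ _
  have hr0 : (0 : ℝ) ≤ r := le_trans zero_le_one hr1
  have hW0 : (0 : ℝ) ≤ ‖W‖ := norm_nonneg _
  have hterm : ∀ i ∈ range m,
      ‖(ContinuousLinearMap.mul ℂ A (W ^ i)).comp
        ((ContinuousLinearMap.mul ℂ A).flip (W ^ (m - 1 - i)))‖ ≤ N ^ 2 * r ^ m := by
    intro i hi
    rw [mem_range] at hi
    calc ‖(ContinuousLinearMap.mul ℂ A (W ^ i)).comp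
          ((ContinuousLinearMap.mul ℂ A).flip (W ^ (m - 1 - i)))‖
        ≤ ‖ContinuousLinearMap.mul ℂ A (W ^ i)‖ *
            ‖(ContinuousLinearMap.mul ℂ A).flip (W ^ (m - 1 - i))‖ :=
          ContinuousLinearMap.opNorm_comp_le _ _
      _ ≤ ‖W ^ i‖ * ‖W ^ (m - 1 - i)‖ := by
          refine mul_le_mul (opNorm_mulLeft_le _) (opNorm_mulRight_le _) (norm_nonneg _)
            (norm_nonneg _)
      _ ≤ (N * ‖W‖ ^ i) * (N * ‖W‖ ^ (m - 1 - i)) := by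
          refine mul_le_mul (norm_pow_le_max' W i) (norm_pow_le_max' W _) (norm_nonneg _) ?_
          positivity
      _ ≤ (N * r ^ i) * (N * r ^ (m - 1 - i)) := by gcongr
      _ = N ^ 2 * r ^ (i + (m - 1 - i)) := by rw [pow_add]; ring
      _ ≤ N ^ 2 * r ^ m := by
          gcongr
          · omega
  have hm2 : (m : ℝ) ≤ 2 ^ m := by exact_mod_cast (Nat.lt_two_pow_self (n := m)).le
  rw [norm_smul, norm_inv, Complex.norm_natCast]
  calc ((m.factorial : ℝ))⁻¹ * ‖∑ i ∈ range m, (ContinuousLinearMap.mul ℂ A (W ^ i)).comp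
        ((ContinuousLinearMap.mul ℂ A).flip (W ^ (m - 1 - i)))‖
      ≤ ((m.factorial : ℝ))⁻¹ * (m * (N ^ 2 * r ^ m)) := by
        refine mul_le_mul_of_nonneg_left ?_ (by positivity)
        calc ‖∑ i ∈ range m, (ContinuousLinearMap.mul ℂ A (W ^ i)).comp
              ((ContinuousLinearMap.mul ℂ A).flip (W ^ (m - 1 - i)))‖
            ≤ ∑ i ∈ range m, ‖(ContinuousLinearMap.mul ℂ A (W ^ i)).comp
              ((ContinuousLinearMap.mul ℂ A).flip (W ^ (m - 1 - i)))‖ := norm_sum_le _ _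
          _ ≤ ∑ _i ∈ range m, N ^ 2 * r ^ m := Finset.sum_le_sum hterm
          _ = m * (N ^ 2 * r ^ m) := by rw [Finset.sum_const, card_range]; simp [nsmul_eq_mul]
    _ ≤ ((m.factorial : ℝ))⁻¹ * (2 ^ m * (N ^ 2 * r ^ m)) := by
        refine mul_le_mul_of_nonneg_left ?_ (by positivity)
        refine mul_le_mul_of_nonneg_right hm2 (by positivity)
    _ = N ^ 2 * ((2 * r) ^ m / m.factorial) := by rw [mul_pow]; ring

end CLMLemmas

set_option maxHeartbeats 1000000 in
theorem exp_matrix_hasFDerivAt (n : ℕ) (X : Matrix (Fin n) (Fin n) ℂ) :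
    HasFDerivAt (NormedSpace.exp)
      ((mulRightCLM n (NormedSpace.exp X)).comp
        (∑' k : ℕ, (((k + 1).factorial : ℂ))⁻¹ • adCLM n X ^ k))
      X := by
  classical
  let D : ℕ →  Matrix (Fin n) (Fin n) ℂ → (Matrix (Fin n) (Fin n) ℂ →L[ℂ] Matrix (Fin n) (Fin n) ℂ) := fun m W => ((m.factorial : ℂ))⁻¹ •
    ∑ i ∈ Finset.range m, (ContinuousLinearMap.mul ℂ (Matrix (Fin n) (Fin n) ℂ) (W ^ i)).comp
      ((ContinuousLinearMap.mul ℂ (Matrix (Fin n) (Fin n) ℂ)).flip (W ^ (m - 1 - i)))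
  -- Step 1: term-by-term differentiation of the exponential series
  have key : HasFDerivAt (fun W : Matrix (Fin n) (Fin n) ℂ => ∑' m : ℕ, ((m.factorial : ℂ))⁻¹ • W ^ m)
      (∑' m : ℕ, D m X) X := by
    refine hasFDerivAt_tsum_of_isPreconnected
      (u := fun m => (max ‖(1 : Matrix (Fin n) (Fin n) ℂ)‖ 1) ^ 2 * ((2 * (‖X‖ + 1)) ^ m / m.factorial))
      (((Real.summable_pow_div_factorial (2 * (‖X‖ + 1))).mul_left _))
      Metric.isOpen_ball (convex_ball X 1).isPreconnected
      (fun m W _ => (hasFDerivAt_pow_clm m W).const_smul ((m.factorial : ℂ))⁻¹)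
      (fun m W hW => ?_) (Metric.mem_ball_self one_pos)
      (NormedSpace.expSeries_summable' (𝕂 := ℂ) X) (Metric.mem_ball_self one_pos)
    refine D_norm_bound m W (‖X‖ + 1) (by linarith [norm_nonneg X]) ?_
    have h1 : ‖W - X‖ < 1 := by simpa [dist_eq_norm] using Metric.mem_ball.mp hW
    have h2 : X + (W - X) = W := by abel
    calc ‖W‖ = ‖X + (W - X)‖ := by rw [h2]
      _ ≤ ‖X‖ + ‖W - X‖ := norm_add_le _ _
      _ ≤ ‖X‖ + 1 := by linarith
  -- Step 2: identify the derivative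
  have hfinal : (∑' m : ℕ, D m X)
      = (mulRightCLM n (NormedSpace.exp X)).comp
          (∑' k : ℕ, (((k + 1).factorial : ℂ))⁻¹ • adCLM n X ^ k) := by
    have hDX : ∀ m : ℕ, D m X = ((m.factorial : ℂ))⁻¹ •
        ∑ i ∈ Finset.range m, (ContinuousLinearMap.mul ℂ (Matrix (Fin n) (Fin n) ℂ) X) ^ i *
          ((ContinuousLinearMap.mul ℂ (Matrix (Fin n) (Fin n) ℂ)).flip X) ^ (m - 1 - i) := by
      intro m
      exact congrArg (fun S => ((m.factorial : ℂ))⁻¹ • S)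
        (Finset.sum_congr rfl fun i _ => comp_pow_eq X i (m - 1 - i))
    have hcomm := commute_mulLeft_mulRight X
    have hsub : ContinuousLinearMap.mul ℂ (Matrix (Fin n) (Fin n) ℂ) X - (ContinuousLinearMap.mul ℂ (Matrix (Fin n) (Fin n) ℂ)).flip X
        = adCLM n X := rfl
    have hmr : mulRightCLM n (NormedSpace.exp X)
        = ∑' k : ℕ, ((k.factorial : ℂ))⁻¹ • ((ContinuousLinearMap.mul ℂ (Matrix (Fin n) (Fin n) ℂ)).flip X) ^ k := by
      have hexp : NormedSpace.exp X = ∑' m : ℕ, ((m.factorial : ℂ))⁻¹ • X ^ m := by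
        rw [NormedSpace.exp_eq_tsum (𝕂 := ℂ)]
      show (ContinuousLinearMap.mul ℂ (Matrix (Fin n) (Fin n) ℂ)).flip (NormedSpace.exp X)
          = ∑' k : ℕ, ((k.factorial : ℂ))⁻¹ • ((ContinuousLinearMap.mul ℂ (Matrix (Fin n) (Fin n) ℂ)).flip X) ^ k
      rw [hexp]
      refine (ContinuousLinearMap.map_tsum ((ContinuousLinearMap.mul ℂ (Matrix (Fin n) (Fin n) ℂ)).flip) (NormedSpace.expSeries_summable' (𝕂 := ℂ) X)).trans ?_
      refine tsum_congr fun k => ?_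
      rw [map_smul, mulRightCLM_pow]
    rw [tsum_congr hDX]
    refine (heart' hcomm).trans ?_
    rw [hsub, hmr, ContinuousLinearMap.mul_def]
    rfl
  have hexp2 : (NormedSpace.exp : Matrix (Fin n) (Fin n) ℂ → Matrix (Fin n) (Fin n) ℂ)
      = fun W : Matrix (Fin n) (Fin n) ℂ => ∑' m : ℕ, ((m.factorial : ℂ))⁻¹ • W ^ m := NormedSpace.exp_eq_tsum (𝕂 := ℂ)
  rw [← hfinal, hexp2]
  exact key
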